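/- Let T̃_m be the m×(m−1) matrix obtained from the tridiagonal Toeplitz matrix T_m (with −2 on the diagonal and 1 on the adjacent diagonals) by appending as last row the vector (1, 0, ..., 0, 1). Then det(T̃_mᵀ T̃_m) = m^3. -/

import Mathlib

open Matrix Finset

namespace DetGramAux

/-- tridiagonal matrix with 2 on diagonal, -1 adjacent -/
def A (N : ℕ) : Matrix (Fin N) (Fin N) ℤ :=
  Matrix.of fun i j => if (i:ℕ) = (j:ℕ) then 2
    else if (i:ℕ) = (j:ℕ)+1 ∨ (j:ℕ) = (i:ℕ)+1 then -1 else 0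

/-- lower bidiagonal: 1 on diagonal, -1 on subdiagonal -/
def B (N : ℕ) : Matrix (Fin N) (Fin N) ℤ :=
  Matrix.of fun i j => if (i:ℕ) = (j:ℕ) then 1 else if (i:ℕ) = (j:ℕ)+1 then -1 else 0

/-- identity plus all-ones -/
def K (N : ℕ) : Matrix (Fin N) (Fin N) ℤ :=
  Matrix.of fun i j => if (i:ℕ) = (j:ℕ) then 2 else 1

/-- B * K -/
def F (N : ℕ) : Matrix (Fin N) (Fin N) ℤ :=
  Matrix.of fun i j => (if (i:ℕ) = 0 then 1 else 0) + (if (i:ℕ) = (j:ℕ) then 1 else 0)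
    - (if (i:ℕ) = (j:ℕ)+1 then 1 else 0)

def v (N : ℕ) : Fin N → ℤ :=
  fun i => (if (i:ℕ) = 0 then 1 else 0) + (if (i:ℕ) = N-1 then 1 else 0)

lemma sum_if_eq {N : ℕ} (f : Fin N → ℤ) (c : ℕ) :
    (∑ k : Fin N, if (k:ℕ) = c then f k else 0) = if h : c < N then f ⟨c, h⟩ else 0 := by
  split
  · next h =>
    rw [Finset.sum_eq_single (⟨c, h⟩ : Fin N)]
    · simp
    · intro b _ hb
      exact if_neg (fun hc => hb (Fin.ext hc))
    · simp
  · next h =>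
    apply Finset.sum_eq_zero
    intro k _
    refine if_neg fun hc => h ?_
    have := k.isLt
    omega

lemma sum_if_succ {N : ℕ} (f : Fin N → ℤ) (c : ℕ) :
    (∑ k : Fin N, if (k:ℕ)+1 = c then f k else 0)
      = if h : c - 1 < N ∧ 1 ≤ c then f ⟨c-1, h.1⟩ else 0 := by
  split
  · next h =>
    have hv : ((⟨c-1, h.1⟩ : Fin N) : ℕ) = c - 1 := rfl
    rw [Finset.sum_eq_single (⟨c-1, h.1⟩ : Fin N)]
    · rw [if_pos (by omega)]
    · intro b _ hb
      refine if_neg (fun hc => hb (Fin.ext ?_))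
      omega
    · simp
  · next h =>
    apply Finset.sum_eq_zero
    intro k _
    refine if_neg (fun hc => h ?_)
    have := k.isLt
    omega

lemma hBK (N : ℕ) : B N * K N = F N := by
  ext i j
  rw [Matrix.mul_apply]
  have h : ∀ k : Fin N, B N i k * K N k j
      = (if (k:ℕ) = (i:ℕ) then K N k j else 0)
        + (if (k:ℕ)+1 = (i:ℕ) then -(K N k j) else 0) := by
    intro k
    simp only [B, K, Matrix.of_apply]
    split_ifs <;> omega
  rw [Finset.sum_congr rfl (fun k _ => h k), Finset.sum_add_distrib, sum_if_eq, sum_if_succ]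
  have hi := i.isLt
  have hj := j.isLt
  simp only [K, F, Matrix.of_apply]
  split_ifs <;> omega

lemma hFBt (N : ℕ) : F N * (B N)ᵀ = A N := by
  ext i j
  rw [Matrix.mul_apply]
  have h : ∀ k : Fin N, F N i k * (B N)ᵀ k j
      = (if (k:ℕ) = (j:ℕ) then F N i k else 0)
        + (if (k:ℕ)+1 = (j:ℕ) then -(F N i k) else 0) := by
    intro k
    simp only [F, B, Matrix.of_apply, Matrix.transpose_apply]
    split_ifs <;> omega
  rw [Finset.sum_congr rfl (fun k _ => h k), Finset.sum_add_distrib, sum_if_eq, sum_if_succ]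
  have hi := i.isLt
  have hj := j.isLt
  simp only [F, A, Matrix.of_apply]
  split_ifs <;> omega

lemma rowsum (N : ℕ) (i : Fin N) : (∑ k, A N i k) = v N i := by
  have h : ∀ k : Fin N, A N i k
      = ((if (k:ℕ) = (i:ℕ) then 2 else 0) + (if (k:ℕ)+1 = (i:ℕ) then -1 else 0))
        + (if (k:ℕ) = (i:ℕ)+1 then -1 else 0) := by
    intro k
    simp only [A, Matrix.of_apply]
    split_ifs <;> omega
  rw [Finset.sum_congr rfl (fun k _ => h k), Finset.sum_add_distrib, Finset.sum_add_distrib,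
    sum_if_eq, sum_if_succ, sum_if_eq]
  have hi := i.isLt
  simp only [v]
  split_ifs <;> omega

lemma Asymm (N : ℕ) (i j : Fin N) : A N i j = A N j i := by
  simp only [A, Matrix.of_apply]
  split_ifs <;> omega

lemma hAK (N : ℕ) :
    A N * K N = A N + Matrix.of (fun i (_ : Fin N) => v N i) := by
  ext i j
  rw [Matrix.mul_apply]
  have h : ∀ k : Fin N, A N i k * K N k j
      = A N i k + (if (k:ℕ) = (j:ℕ) then A N i k else 0) := by
    intro k
    simp only [A, K, Matrix.of_apply]
    split_ifs <;> omega
  rw [Finset.sum_congr rfl (fun k _ => h k), Finset.sum_add_distrib, rowsum, sum_if_eq,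
    dif_pos j.isLt]
  simp only [Matrix.add_apply, Matrix.of_apply]
  rw [show (⟨(j:ℕ), j.isLt⟩ : Fin N) = j from rfl]
  ring

lemma hVA (N : ℕ) :
    (Matrix.of fun i (_ : Fin N) => v N i) * A N
      = Matrix.of (fun i j => v N i * v N j) := by
  ext i j
  rw [Matrix.mul_apply]
  simp only [Matrix.of_apply]
  rw [← Finset.mul_sum]
  congr 1
  rw [Finset.sum_congr rfl (fun k _ => Asymm N k j), rowsum]

lemma hAKA (N : ℕ) :
    A N * K N * A N = A N * A N + Matrix.of (fun i j => v N i * v N j) := by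
  rw [hAK, add_mul, hVA]

lemma detB (N : ℕ) : (B N).det = 1 := by
  rw [Matrix.det_of_lowerTriangular (B N)]
  · apply Finset.prod_eq_one
    intro i _
    simp [B]
  · intro i j hij
    have : (j:ℕ) > (i:ℕ) := hij
    simp only [B, Matrix.of_apply]
    split_ifs <;> omega

lemma detK (N : ℕ) : (K N).det = (N:ℤ) + 1 := by
  have hcr : ∀ i j : Fin N,
      (Matrix.replicateCol (Fin 1) (fun _ : Fin N => (1:ℤ)) * Matrix.replicateRow (Fin 1) (fun _ : Fin N => (1:ℤ))) i j = 1 := by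
    intro i j
    simp [Matrix.mul_apply]
  have hK : K N = (1 : Matrix (Fin N) (Fin N) ℤ)
      + Matrix.replicateCol (Fin 1) (fun _ : Fin N => (1:ℤ)) * Matrix.replicateRow (Fin 1) (fun _ : Fin N => (1:ℤ)) := by
    ext i j
    rw [Matrix.add_apply, hcr, Matrix.one_apply]
    simp only [K, Matrix.of_apply]
    by_cases h : i = j
    · rw [if_pos (congrArg Fin.val h), if_pos h]; norm_num
    · rw [if_neg (fun hc => h (Fin.ext hc)), if_neg h]; norm_num
  rw [hK]
  refine (Matrix.det_one_add_replicateCol_mul_replicateRow (ι := Fin 1) _ _).trans ?_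
  simp [dotProduct, add_comm]

end DetGramAux

open DetGramAux in
/-- Let `T̃_m` be the `m×(m-1)` matrix obtained from the tridiagonal
Toeplitz matrix `T_m` (with `-2` on the diagonal and `1` on the adjacent diagonals)
by appending as last row the vector with `1` in the first and last positions and `0`
elsewhere. Then `det(T̃_mᵀ T̃_m) = m³`. -/
theorem det_gram_extended_tridiagonal (m : ℕ) (hm : 2 ≤ m)
    (Tt : Matrix (Fin m) (Fin (m - 1)) ℤ)
    (hTt : ∀ (i : Fin m) (j : Fin (m - 1)), Tt i j =
      if (i : ℕ) < m - 1 then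
        (if (i : ℕ) = (j : ℕ) then -2
          else if (i : ℕ) = (j : ℕ) + 1 ∨ (j : ℕ) = (i : ℕ) + 1 then 1 else 0)
      else
        ((if (j : ℕ) = 0 then 1 else 0) + (if (j : ℕ) = m - 2 then 1 else 0))) :
    (Tt.transpose * Tt).det = (m : ℤ) ^ 3 := by
  obtain ⟨n, rfl⟩ : ∃ n, m = n + 2 := ⟨m - 2, by omega⟩
  set N := n + 1 with hN
  -- note : m - 1 = N and m - 2 = n definitionally
  have hG : Tt.transpose * Tt = A N * A N + Matrix.of (fun i j => v N i * v N j) := by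
    ext i j
    rw [Matrix.mul_apply]
    have hrow : ∀ (k : Fin N) (l : Fin N), Tt (Fin.castSucc k) l = -(A N k l) := by
      intro k l
      rw [hTt]
      have hk := k.isLt
      have : ((Fin.castSucc k : Fin (n+2)) : ℕ) = (k:ℕ) := rfl
      rw [this, if_pos (by omega)]
      simp only [A, Matrix.of_apply]
      split_ifs <;> omega
    have hlast : ∀ l : Fin N, Tt (Fin.last (N)) l = v N l := by
      intro l
      rw [hTt]
      have : ((Fin.last N : Fin (n+2)) : ℕ) = N := rfl
      rw [this, if_neg (by omega)]
      simp only [v]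
      rfl
    calc (∑ k : Fin (n+2), Tt.transpose i k * Tt k j)
        = ∑ k : Fin (N+1), Tt k i * Tt k j := by
          apply Finset.sum_congr rfl; intro k _; rw [Matrix.transpose_apply]
      _ = (∑ k : Fin N, Tt (Fin.castSucc k) i * Tt (Fin.castSucc k) j)
            + Tt (Fin.last N) i * Tt (Fin.last N) j := Fin.sum_univ_castSucc _
      _ = (∑ k : Fin N, A N i k * A N k j) + v N i * v N j := by
          rw [hlast, hlast]
          congr 1
          apply Finset.sum_congr rfl
          intro k _
          rw [hrow, hrow, Asymm N k i]
          ring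
      _ = (A N * A N + Matrix.of (fun i j => v N i * v N j)) i j := by
          simp [Matrix.mul_apply]
  have key : Tt.transpose * Tt = B N * K N * (B N)ᵀ * K N * (B N * K N * (B N)ᵀ) := by
    rw [hBK, hFBt, hG, ← hAKA]
  rw [key]
  simp only [Matrix.det_mul, Matrix.det_transpose, detB, detK]
  rw [hN]
  push_cast
  ring
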